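/- Let d, k, ℓ be positive integers with 2k > d, let ε ∈ (2k/ℓ, 1), and let ρ : ℝ^d → ℝ be a positive measurable function satisfying (1-ε)-slow growth with constant C_sg > 0. Let f : ℝ^d → ℝ be a C^{2k} function with compact support, and let g : ℝ^d → ℝ be any function such that for some C₀ > 0 and all x ∈ ℝ^d, |f(x) - g(x)| ≤ C₀ · ∫_{ℝ^d} |Δ^k f(α)| · ρ(α)^{2k-d} · (1 + |x-α|/ρ(α))^{-(ℓ+d-2k)} dα, where Δ^k denotes the k-fold iterated Laplacian. Then there exists a constant C > 0, depending only on d, k, ℓ, ε, C_sg and C₀, such that for all x ∈ ℝ^d, |f(x) - g(x)| ≤ C · ρ(x)^{2k} · ‖Δ^k f‖_∞. -/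

import Mathlib

open Real MeasureTheory

noncomputable def Lap (d : ℕ) (f : EuclideanSpace ℝ (Fin d) → ℝ) :
    EuclideanSpace ℝ (Fin d) → ℝ :=
  fun x => ∑ i : Fin d,
    iteratedFDeriv ℝ 2 f x ![EuclideanSpace.single i 1, EuclideanSpace.single i 1]

lemma lap_contDiff {d n : ℕ} {f : EuclideanSpace ℝ (Fin d) → ℝ}
    (hf : ContDiff ℝ (n + 2 : ℕ) f) : ContDiff ℝ n (Lap d f) := by
  unfold Lap
  apply ContDiff.sum
  intro i _
  have h1 : ContDiff ℝ n (iteratedFDeriv ℝ 2 f) :=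
    hf.iteratedFDeriv_right (by push_cast; exact le_refl _)
  exact (ContinuousMultilinearMap.apply ℝ (fun _ : Fin 2 => EuclideanSpace ℝ (Fin d)) ℝ
    ![EuclideanSpace.single i 1, EuclideanSpace.single i 1]).contDiff.comp h1

lemma lap_hasCompactSupport {d : ℕ} {f : EuclideanSpace ℝ (Fin d) → ℝ}
    (hf : HasCompactSupport f) : HasCompactSupport (Lap d f) := by
  have h := hf.iteratedFDeriv (𝕜 := ℝ) 2
  have := h.comp_left
    (g := fun Φ : EuclideanSpace ℝ (Fin d) [×2]→L[ℝ] ℝ =>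
      ∑ i : Fin d, Φ ![EuclideanSpace.single i 1, EuclideanSpace.single i 1]) (by simp)
  exact this

lemma iter_lap_cont {d : ℕ} (k : ℕ) :
    ∀ f : EuclideanSpace ℝ (Fin d) → ℝ, ContDiff ℝ (2 * k : ℕ) f → HasCompactSupport f →
      Continuous ((Lap d)^[k] f) ∧ HasCompactSupport ((Lap d)^[k] f) := by
  induction k with
  | zero => exact fun f hf hs => ⟨hf.continuous, hs⟩
  | succ k ih =>
      intro f hf hs
      rw [Function.iterate_succ_apply]
      have hf' : ContDiff ℝ (2 * k + 2 : ℕ) f := by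
        have : (2 * (k + 1) : ℕ) = 2 * k + 2 := by ring
        rwa [this] at hf
      exact ih _ (lap_contDiff hf') (lap_hasCompactSupport hs)

set_option maxHeartbeats 1000000 in
theorem slow_growth_error_bound
    (d k l : ℕ) (hd : 0 < d) (hk : 0 < k) (hl : 0 < l) (hdk : d < 2 * k)
    (ε : ℝ) (hε0 : (2 * k : ℝ) / l < ε) (hε1 : ε < 1)
    (Csg : ℝ) (hCsg : 0 < Csg) (C₀ : ℝ) (hC₀ : 0 < C₀) :
    ∃ C > 0, ∀ ρ : EuclideanSpace ℝ (Fin d) → ℝ, Measurable ρ → (∀ x, 0 < ρ x) →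
      (∀ x α, ρ α ≤ Csg * ρ x * (1 + ‖x - α‖ / ρ x) ^ (1 - ε)) →
      ∀ f g : EuclideanSpace ℝ (Fin d) → ℝ,
        ContDiff ℝ (2 * k) f → HasCompactSupport f →
        (∀ x, |f x - g x| ≤ C₀ * ∫ α, |(Lap d)^[k] f α| *
            ρ α ^ ((2 * k : ℝ) - d) * (1 + ‖x - α‖ / ρ α) ^ (-((l : ℝ) + d - 2 * k))) →
        ∀ x, |f x - g x| ≤ C * ρ x ^ (2 * k : ℝ) * ⨆ α, |(Lap d)^[k] f α| := by
  -- basic numeric facts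
  have hl0 : (0 : ℝ) < l := by exact_mod_cast hl
  have hdk' : (d : ℝ) < 2 * k := by exact_mod_cast hdk
  have hεl : (2 * k : ℝ) < ε * l := by
    have := (div_lt_iff₀ hl0).mp hε0
    linarith
  have hε0' : 0 < ε := by
    have h2k : (0 : ℝ) < 2 * k := by positivity
    nlinarith
  have h2kl : (2 * k : ℝ) < l := by nlinarith
  -- constants
  set C₁ : ℝ := max 1 Csg with hC₁def
  have hC₁1 : (1 : ℝ) ≤ C₁ := le_max_left _ _
  have hC₁0 : (0 : ℝ) < C₁ := lt_of_lt_of_le one_pos hC₁1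
  set p : ℝ := (2 * k : ℝ) - d with hpdef
  set s : ℝ := (l : ℝ) + d - 2 * k with hsdef
  have hp0 : 0 < p := by simp only [hpdef]; linarith
  have hs0 : 0 < s := by simp only [hsdef]; linarith
  set β : ℝ := (2 * k : ℝ) - d - ε * l with hβdef
  have hβ : β < -(d : ℝ) := by simp only [hβdef]; linarith
  set I : ℝ := ∫ u : EuclideanSpace ℝ (Fin d), (1 + ‖u‖) ^ β with hIdef
  have hI0 : 0 ≤ I :=
    integral_nonneg fun u => rpow_nonneg (by positivity) _
  refine ⟨C₀ * C₁ ^ (l : ℝ) * I + 1, by positivity, ?_⟩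
  intro ρ hρm hρpos hsg f g hf hsupp hfg x
  -- boundedness of the iterated Laplacian
  set h : EuclideanSpace ℝ (Fin d) → ℝ := (Lap d)^[k] f with hhdef
  obtain ⟨hc, hcs⟩ := iter_lap_cont k f (by exact_mod_cast hf) hsupp
  set M : ℝ := ⨆ α, |h α| with hMdef
  have hbdd : BddAbove (Set.range fun α => |h α|) :=
    hc.abs.bddAbove_range_of_hasCompactSupport hcs.abs
  have hM : ∀ α, |h α| ≤ M := fun α => le_ciSup hbdd α
  have hM0 : 0 ≤ M := le_trans (abs_nonneg _) (hM 0)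
  set r : ℝ := ρ x with hrdef
  have hr : 0 < r := hρpos x
  set K : ℝ := M * ((C₁ * r) ^ p * C₁ ^ s) with hKdef
  have hK0 : 0 ≤ K := by positivity
  -- pointwise bound on the integrand
  have key : ∀ α, |h α| * ρ α ^ ((2 * k : ℝ) - d) *
      (1 + ‖x - α‖ / ρ α) ^ (-((l : ℝ) + d - 2 * k)) ≤ K * (1 + ‖x - α‖ / r) ^ β := by
    intro α
    set t : ℝ := ‖x - α‖ / r with htdef
    have ht0 : 0 ≤ t := by positivity
    have h1t : (1 : ℝ) ≤ 1 + t := by linarith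
    have h1t0 : (0 : ℝ) < 1 + t := by linarith
    have hA : 0 < ρ α := hρpos α
    have hX : (0 : ℝ) < (1 + t) ^ (1 - ε) := rpow_pos_of_pos h1t0 _
    have h1 : ρ α ≤ C₁ * r * (1 + t) ^ (1 - ε) := by
      refine (hsg x α).trans ?_
      gcongr
      exact le_max_right _ _
    -- bound on ρ α ^ p
    have h2 : ρ α ^ p ≤ (C₁ * r) ^ p * (1 + t) ^ ((1 - ε) * p) := by
      calc ρ α ^ p ≤ (C₁ * r * (1 + t) ^ (1 - ε)) ^ p :=
            rpow_le_rpow hA.le h1 hp0.le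
        _ = (C₁ * r) ^ p * ((1 + t) ^ (1 - ε)) ^ p := mul_rpow (by positivity) hX.le
        _ = (C₁ * r) ^ p * (1 + t) ^ ((1 - ε) * p) := by rw [← rpow_mul h1t0.le]
    -- lower bound on 1 + ‖x-α‖/ρα
    have h3 : (1 + t) ^ ε / C₁ ≤ 1 + ‖x - α‖ / ρ α := by
      have e0 : (1 + t) ^ (ε - 1) ≤ 1 :=
        rpow_le_one_of_one_le_of_nonpos h1t (by linarith)
      have e1 : (1 + t) ^ ε ≤ 1 + t / (1 + t) ^ (1 - ε) := by
        have eq1 : (1 + t) ^ ε = (1 + t) ^ (ε - 1) + t * (1 + t) ^ (ε - 1) := by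
          have : (1 + t) ^ ε = (1 + t) ^ (ε - 1) * (1 + t) := by
            rw [← rpow_add_one h1t0.ne']
            ring_nf
          rw [this]; ring
        have eq2 : t / (1 + t) ^ (1 - ε) = t * (1 + t) ^ (ε - 1) := by
          rw [div_eq_mul_inv, ← rpow_neg h1t0.le]
          ring_nf
        rw [eq1, eq2]
        linarith
      have e2 : t / (1 + t) ^ (1 - ε) ≤ C₁ * (‖x - α‖ / ρ α) := by
        have d1 : ‖x - α‖ / (C₁ * r * (1 + t) ^ (1 - ε)) ≤ ‖x - α‖ / ρ α :=
          div_le_div_of_nonneg_left (norm_nonneg _) hA h1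
        have d2 : t / (1 + t) ^ (1 - ε) = C₁ * (‖x - α‖ / (C₁ * r * (1 + t) ^ (1 - ε))) := by
          field_simp [htdef]
          ring
          rw [htdef]; field_simp
        rw [d2]
        exact mul_le_mul_of_nonneg_left d1 hC₁0.le
      have e3 : (1 + t) ^ ε ≤ C₁ * (1 + ‖x - α‖ / ρ α) := by
        have : (1 : ℝ) ≤ C₁ * 1 := by linarith
        calc (1 + t) ^ ε ≤ 1 + C₁ * (‖x - α‖ / ρ α) := le_trans e1 (by linarith)
          _ ≤ C₁ * (1 + ‖x - α‖ / ρ α) := by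
              have h4 : 0 ≤ ‖x - α‖ / ρ α := by positivity
              nlinarith
      rw [div_le_iff₀ hC₁0]
      linarith [e3]
    -- bound on the negative power
    have h4 : (1 + ‖x - α‖ / ρ α) ^ (-s) ≤ C₁ ^ s * (1 + t) ^ (-(ε * s)) := by
      have hpos : (0 : ℝ) < (1 + t) ^ ε / C₁ := by positivity
      have := rpow_le_rpow_of_nonpos hpos h3 (neg_nonpos.mpr hs0.le)
      refine this.trans_eq ?_
      rw [div_rpow (by positivity) hC₁0.le, ← rpow_mul h1t0.le,
        show ε * -s = -(ε * s) by ring, Real.rpow_neg hC₁0.le s, div_inv_eq_mul, mul_comm]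
    -- combine
    have hexp : -((l : ℝ) + d - 2 * k) = -s := by simp [hsdef]
    have hpeq : ((2 * k : ℝ) - d) = p := rfl
    rw [hexp, hpeq]
    calc |h α| * ρ α ^ p * (1 + ‖x - α‖ / ρ α) ^ (-s)
        ≤ M * ((C₁ * r) ^ p * (1 + t) ^ ((1 - ε) * p)) * (C₁ ^ s * (1 + t) ^ (-(ε * s))) := by
          have b1 : |h α| * ρ α ^ p ≤ M * ((C₁ * r) ^ p * (1 + t) ^ ((1 - ε) * p)) :=
            mul_le_mul (hM α) h2 (rpow_nonneg hA.le _) hM0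
          exact mul_le_mul b1 h4
            (rpow_nonneg (by positivity : (0:ℝ) ≤ 1 + ‖x - α‖ / ρ α) _) (by positivity)
      _ = K * ((1 + t) ^ ((1 - ε) * p) * (1 + t) ^ (-(ε * s))) := by
          rw [hKdef]; ring
      _ = K * (1 + t) ^ β := by
          rw [← rpow_add h1t0]
          congr 1
          simp only [hβdef, hpdef, hsdef]
          ring
  -- integrability of the majorant
  have hFint : Integrable (fun u : EuclideanSpace ℝ (Fin d) => (1 + ‖u‖) ^ β) := by
    have : ((Module.finrank ℝ (EuclideanSpace ℝ (Fin d))) : ℝ) < -β := by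
      rw [finrank_euclideanSpace_fin]
      linarith
    have := integrable_one_add_norm (μ := (volume : Measure (EuclideanSpace ℝ (Fin d)))) this
    simpa using this
  have hF2int : Integrable (fun u : EuclideanSpace ℝ (Fin d) => (1 + ‖r⁻¹ • u‖) ^ β) :=
    (integrable_comp_smul_iff volume
      (fun u : EuclideanSpace ℝ (Fin d) => (1 + ‖u‖) ^ β) (inv_ne_zero hr.ne')).mpr hFint
  have hnorm : ∀ w : EuclideanSpace ℝ (Fin d), ‖r⁻¹ • w‖ = ‖w‖ / r := by
    intro w
    rw [norm_smul, norm_inv, Real.norm_eq_abs, abs_of_pos hr, div_eq_inv_mul]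
  have hGint : Integrable (fun α : EuclideanSpace ℝ (Fin d) => (1 + ‖x - α‖ / r) ^ β) := by
    have := hF2int.comp_sub_left x
    refine this.congr (Filter.Eventually.of_forall fun α => ?_)
    simp only [hnorm]
  -- the integral of the majorant
  have hint : (∫ α : EuclideanSpace ℝ (Fin d), (1 + ‖x - α‖ / r) ^ β) = r ^ d * I := by
    have e1 : (∫ α : EuclideanSpace ℝ (Fin d), (1 + ‖x - α‖ / r) ^ β)
        = ∫ α : EuclideanSpace ℝ (Fin d), (1 + ‖r⁻¹ • (x - α)‖) ^ β := by
      congr 1; ext α; rw [hnorm]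
    have e2 : (∫ α : EuclideanSpace ℝ (Fin d), (1 + ‖r⁻¹ • (x - α)‖) ^ β)
        = ∫ u : EuclideanSpace ℝ (Fin d), (1 + ‖r⁻¹ • u‖) ^ β :=
      integral_sub_left_eq_self (fun u => (1 + ‖r⁻¹ • u‖) ^ β) volume x
    have e3 : (∫ u : EuclideanSpace ℝ (Fin d), (1 + ‖r⁻¹ • u‖) ^ β)
        = |r ^ Module.finrank ℝ (EuclideanSpace ℝ (Fin d))| • ∫ u : EuclideanSpace ℝ (Fin d), (1 + ‖u‖) ^ β :=
      Measure.integral_comp_inv_smul volume (fun u => (1 + ‖u‖) ^ β) r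
    rw [e1, e2, e3, finrank_euclideanSpace_fin, smul_eq_mul, abs_of_pos (by positivity)]
  -- put it together
  have hmono : (∫ α, |h α| * ρ α ^ ((2 * k : ℝ) - d) *
        (1 + ‖x - α‖ / ρ α) ^ (-((l : ℝ) + d - 2 * k)))
      ≤ ∫ α, K * (1 + ‖x - α‖ / r) ^ β := by
    refine integral_mono_of_nonneg (Filter.Eventually.of_forall fun α => ?_)
      (hGint.const_mul K) (Filter.Eventually.of_forall key)
    have := hρpos α
    positivity
  have hintK : (∫ α : EuclideanSpace ℝ (Fin d), K * (1 + ‖x - α‖ / r) ^ β) = K * (r ^ d * I) := by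
    rw [integral_const_mul, hint]
  have main : |f x - g x| ≤ C₀ * (K * (r ^ d * I)) := by
    refine (hfg x).trans ?_
    rw [← hintK]
    exact mul_le_mul_of_nonneg_left hmono hC₀.le
  -- rearrange the constant
  have hre : C₀ * (K * (r ^ d * I)) = (C₀ * C₁ ^ (l : ℝ) * I) * r ^ (2 * k : ℝ) * M := by
    rw [hKdef]
    rw [mul_rpow hC₁0.le hr.le]
    have e1 : C₁ ^ p * C₁ ^ s = C₁ ^ (l : ℝ) := by
      rw [← rpow_add hC₁0]
      congr 1
      simp only [hpdef, hsdef]; ring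
    have e2 : r ^ p * (r : ℝ) ^ (d : ℕ) = r ^ (2 * k : ℝ) := by
      rw [← rpow_natCast r d, ← rpow_add hr]
      congr 1
      simp only [hpdef]; ring
    calc C₀ * (M * (C₁ ^ p * r ^ p * C₁ ^ s) * (r ^ d * I))
        = C₀ * ((C₁ ^ p * C₁ ^ s) * (r ^ p * (r : ℝ) ^ (d : ℕ)) * I * M) := by ring
      _ = (C₀ * C₁ ^ (l : ℝ) * I) * r ^ (2 * k : ℝ) * M := by rw [e1, e2]; ring
  rw [hre] at main
  refine main.trans ?_
  have hfac : (0:ℝ) ≤ r ^ (2 * k : ℝ) * M := by positivity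
  nlinarith [hfac]
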